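/- arXiv:1007.0921 — 4 statements merged into one kernel-verified Lean document; each statement's English description precedes it below -/
import Mathlib

section
/- For any positive integer n, the partial sum of the linear process decomposes almost surely as Σ_{k=1}^n X_k = A(Σ_{k=1}^n ε_k) + Q_n + R_n, where Q_n = Σ_{k=1}^n Σ_{|j|>n} a_{k−j}(ε_j) and R_n = Σ_{|j|≤n} c_{j,n}(ε_j). -/
open MeasureTheory ProbabilityTheory
open scoped ENNReal

/-- For any positive integer `n`, the partial sum of the Hilbertian linear
process decomposes almost surely as
`∑_{k=1}^n X_k = A (∑_{k=1}^n ε_k) + Q_n + R_n`, where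
`Q_n = ∑_{k=1}^n ∑_{|j|>n} a_{k-j}(ε_j)` and `R_n = ∑_{|j|≤n} c_{j,n}(ε_j)`. -/
theorem partial_sum_decomposition
    {H : Type*} [NormedAddCommGroup H] [InnerProductSpace ℝ H] [CompleteSpace H]
    [SecondCountableTopology H] [MeasurableSpace H] [BorelSpace H]
    {Ω : Type*} [MeasurableSpace Ω] {P : Measure Ω} [IsProbabilityMeasure P]
    (ε : ℤ → Ω → H) (hεmeas : ∀ k, Measurable (ε k))
    (hεindep : iIndepFun ε P)
    (hεident : ∀ k, IdentDistrib (ε k) (ε 0) P P)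
    (hεint : Integrable (ε 0) P) (hεcent : ∫ ω, ε 0 ω ∂P = 0)
    (a : ℤ → H →L[ℝ] H) (ha : Summable fun j => ‖a j‖)
    (X : ℤ → Ω → H)
    (hX : ∀ k, ∀ᵐ ω ∂P, X k ω = ∑' j : ℤ, a j (ε (k - j) ω))
    (A : H →L[ℝ] H) (hA : A = ∑' j : ℤ, a j)
    (b : ℤ → H →L[ℝ] H) (hb : ∀ j : ℤ, j ≠ 0 → b j = a j) (hb0 : b 0 = a 0 - A)
    (c : ℤ → ℕ → H →L[ℝ] H)
    (hc : ∀ (j : ℤ) (n : ℕ), c j n = ∑ i ∈ Finset.Icc (1 : ℤ) n, b (i - j))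
    (n : ℕ) (hn : 0 < n)
    (Q R : Ω → H)
    (hQ : ∀ ω, Q ω = ∑ k ∈ Finset.Icc (1 : ℤ) n,
      ∑' j : {j : ℤ // (n : ℤ) < |j|}, a (k - (j : ℤ)) (ε (j : ℤ) ω))
    (hR : ∀ ω, R ω = ∑ j ∈ Finset.Icc (-(n : ℤ)) n, c j n (ε j ω)) :
    ∀ᵐ ω ∂P, ∑ k ∈ Finset.Icc (1 : ℤ) n, X k ω
      = A (∑ k ∈ Finset.Icc (1 : ℤ) n, ε k ω) + Q ω + R ω := by
  classical
  set S : Finset ℤ := Finset.Icc (-(n : ℤ)) n with hS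
  set K : Finset ℤ := Finset.Icc (1 : ℤ) n with hK
  have hKS : K ⊆ S := by
    intro j hj
    simp only [hK, hS, Finset.mem_Icc] at *
    omega
  -- a.s. summability of the reindexed series
  have hsum : ∀ k : ℤ, ∀ᵐ ω ∂P, Summable fun j : ℤ => ‖a (k - j) (ε j ω)‖ := by
    intro k
    have hC : ∫⁻ ω, (‖ε 0 ω‖₊ : ℝ≥0∞) ∂P < ⊤ := hεint.2
    have hid : ∀ j : ℤ, ∫⁻ ω, (‖ε j ω‖₊ : ℝ≥0∞) ∂P = ∫⁻ ω, (‖ε 0 ω‖₊ : ℝ≥0∞) ∂P :=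
      fun j => ((hεident j).comp measurable_enorm).lintegral_eq
    have hmeas : ∀ j : ℤ, Measurable fun ω => (‖a (k - j)‖₊ : ℝ≥0∞) * ‖ε j ω‖₊ :=
      fun j => measurable_const.mul (hεmeas j).enorm
    have hasum : Summable fun j : ℤ => ‖a (k - j)‖₊ := by
      have h1 : Summable fun j : ℤ => ‖a (k - j)‖ := by
        have := (Equiv.subLeft k).summable_iff.2 ha
        simpa [Function.comp_def] using this
      rw [← NNReal.summable_coe]
      simpa [coe_nnnorm] using h1
    have hlt : ∫⁻ ω, ∑' j : ℤ, (‖a (k - j)‖₊ : ℝ≥0∞) * ‖ε j ω‖₊ ∂P < ⊤ := by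
      rw [lintegral_tsum fun j => (hmeas j).aemeasurable]
      have heq : ∀ j : ℤ, ∫⁻ ω, (‖a (k - j)‖₊ : ℝ≥0∞) * ‖ε j ω‖₊ ∂P
          = (‖a (k - j)‖₊ : ℝ≥0∞) * ∫⁻ ω, (‖ε 0 ω‖₊ : ℝ≥0∞) ∂P := fun j => by
        rw [lintegral_const_mul _ (hεmeas j).nnnorm.coe_nnreal_ennreal, hid j]
      rw [tsum_congr heq, ENNReal.tsum_mul_right]
      exact ENNReal.mul_lt_top
        (lt_of_le_of_ne le_top (ENNReal.tsum_coe_ne_top_iff_summable.2 hasum)) hC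
    have hae : ∀ᵐ ω ∂P, ∑' j : ℤ, (‖a (k - j)‖₊ : ℝ≥0∞) * ‖ε j ω‖₊ < ⊤ :=
      ae_lt_top (Measurable.ennreal_tsum hmeas) hlt.ne
    filter_upwards [hae] with ω hω
    have h1 : ∑' j : ℤ, (‖a (k - j) (ε j ω)‖₊ : ℝ≥0∞) ≠ ⊤ := by
      refine ne_top_of_le_ne_top hω.ne (ENNReal.tsum_le_tsum fun j => ?_)
      rw [← ENNReal.coe_mul, ENNReal.coe_le_coe]
      exact (a (k - j)).le_opNNNorm (ε j ω)
    have h2 : Summable fun j : ℤ => ‖a (k - j) (ε j ω)‖₊ :=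
      ENNReal.tsum_coe_ne_top_iff_summable.1 h1
    have h3 := NNReal.summable_coe.2 h2
    simpa [coe_nnnorm] using h3
  have hXall : ∀ᵐ ω ∂P, ∀ k ∈ K, X k ω = ∑' j : ℤ, a j (ε (k - j) ω) :=
    (Filter.eventually_all_finset K).2 fun k _ => hX k
  have hsumall : ∀ᵐ ω ∂P, ∀ k ∈ K, Summable fun j : ℤ => ‖a (k - j) (ε j ω)‖ :=
    (Filter.eventually_all_finset K).2 fun k _ => hsum k
  filter_upwards [hXall, hsumall] with ω hXω hsω
  have hfs : ∀ k ∈ K, Summable fun j : ℤ => a (k - j) (ε j ω) :=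
    fun k hk => Summable.of_norm (hsω k hk)
  -- step 1: rewrite each X k ω as Q-part plus finite part
  have hXk : ∀ k ∈ K, X k ω
      = (∑' j : {j : ℤ // (n : ℤ) < |j|}, a (k - (j : ℤ)) (ε (j : ℤ) ω))
        + ∑ j ∈ S, a (k - j) (ε j ω) := by
    intro k hk
    have h1 : X k ω = ∑' j : ℤ, a (k - j) (ε j ω) := by
      have he := (Equiv.subLeft k).tsum_eq (fun j : ℤ => a (k - j) (ε j ω))
      rw [hXω k hk, ← he]
      exact tsum_congr fun j => by simp [sub_sub_cancel]
    have hsm : Summable fun j : ℤ => a (k - j) (ε j ω) := hfs k hk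
    have hsplit := hsm.tsum_subtype_add_tsum_subtype_compl {j : ℤ | (n : ℤ) < |j|}
    have hcompl : ({j : ℤ | (n : ℤ) < |j|}ᶜ : Set ℤ) = (S : Set ℤ) := by
      ext j
      simp [hS, abs_le, not_lt, Finset.coe_Icc, Set.mem_Icc, and_comm]
    rw [h1, ← hsplit, hcompl]
    exact congrArg₂ (· + ·) rfl (Finset.tsum_subtype' S fun j => a (k - j) (ε j ω))
  rw [Finset.sum_congr rfl hXk, Finset.sum_add_distrib, ← hQ ω]
  -- step 2: algebraic identity for the finite parts
  have hbsplit : ∀ i j : ℤ, b (i - j) = a (i - j) - (if i = j then A else 0) := by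
    intro i j
    by_cases h : i = j
    · subst h; simp [hb0]
    · rw [hb _ (sub_ne_zero.2 h)]; simp [h]
  have hR' : R ω = (∑ j ∈ S, ∑ i ∈ K, a (i - j) (ε j ω)) - ∑ j ∈ K, A (ε j ω) := by
    rw [hR ω]
    have hterm : ∀ j ∈ S, c j n (ε j ω)
        = (∑ i ∈ K, a (i - j) (ε j ω)) - (if j ∈ K then A (ε j ω) else 0) := by
      intro j _
      rw [hc j n, ContinuousLinearMap.sum_apply]
      have h2 : ∀ i ∈ K, b (i - j) (ε j ω)
          = a (i - j) (ε j ω) - (if i = j then A (ε j ω) else 0) := by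
        intro i _
        rw [hbsplit i j]
        by_cases h : i = j <;> simp [h]
      rw [Finset.sum_congr rfl h2, Finset.sum_sub_distrib]
      congr 1
      exact Finset.sum_ite_eq' K j (fun _ => A (ε j ω))
    rw [Finset.sum_congr rfl hterm, Finset.sum_sub_distrib]
    congr 1
    rw [Finset.sum_ite_mem, Finset.inter_eq_right.2 hKS]
  have hmap : A (∑ k ∈ K, ε k ω) = ∑ k ∈ K, A (ε k ω) := map_sum A _ _
  have halg : ∑ k ∈ K, ∑ j ∈ S, a (k - j) (ε j ω)
      = A (∑ k ∈ K, ε k ω) + R ω := by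
    rw [hR', hmap, Finset.sum_comm]
    abel
  rw [halg]
  abel
end

section
/- If ε_0 is essentially bounded and Q_n + R_n is essentially bounded, then for every positive integer n, Δ_n(X) ≤ Δ_n(A(ε)) + 2·c(N)·‖Q_n + R_n‖_∞/√n, where ‖·‖_∞ denotes the essential supremum of the H-norm. -/
open MeasureTheory ProbabilityTheory
open scoped ENNReal NNReal RealInnerProductSpace

/-- The Berry-Esseen distance `Δ_n(Z)` between the law of the norm of the normalized partial
sums `n^{-1/2} ∑_{k=1}^n Z_k` and the law of the norm of the Gaussian variable `N`. -/
noncomputable def BEDelta {H : Type*} [NormedAddCommGroup H] [NormedSpace ℝ H]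
    {Ω : Type*} [MeasurableSpace Ω] (P : Measure Ω)
    (Z : ℤ → Ω → H) (N : Ω → H) (n : ℕ) : ℝ :=
  ⨆ t : ℝ, |(P {ω | ‖(Real.sqrt n)⁻¹ • ∑ k ∈ Finset.Icc (1 : ℤ) n, Z k ω‖ ≤ t}).toReal
    - (P {ω | ‖N ω‖ ≤ t}).toReal|

lemma summable_aux {H : Type*} [NormedAddCommGroup H] [NormedSpace ℝ H] [CompleteSpace H]
    (a : ℤ → H →L[ℝ] H) (ha : Summable fun j => ‖a j‖)
    (e : ℤ → H) (C : ℝ) (he : ∀ j, ‖e j‖ ≤ C) (k : ℤ) :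
    Summable fun j : ℤ => a (k - j) (e j) := by
  have h1 : Summable fun j : ℤ => ‖a (k - j)‖ := by
    have := ha.comp_injective (i := fun j : ℤ => k - j) (fun x y h => by have : k - x = k - y := h; omega)
    exact this
  have h2 : Summable fun j : ℤ => ‖a (k - j)‖ * C := h1.mul_right C
  have h3 : ∀ j : ℤ, ‖a (k - j) (e j)‖ ≤ ‖a (k - j)‖ * C := fun j =>
    le_trans ((a (k - j)).le_opNorm _) (mul_le_mul_of_nonneg_left (he j) (norm_nonneg _))
  exact Summable.of_norm (Summable.of_nonneg_of_le (fun j => norm_nonneg _) h3 h2)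

lemma sum_decomp_aux {H : Type*} [NormedAddCommGroup H] [NormedSpace ℝ H] [CompleteSpace H]
    (a : ℤ → H →L[ℝ] H) (ha : Summable fun j => ‖a j‖)
    (A : H →L[ℝ] H)
    (b : ℤ → H →L[ℝ] H) (hb : ∀ j : ℤ, j ≠ 0 → b j = a j) (hb0 : b 0 = a 0 - A)
    (c : ℤ → ℕ → H →L[ℝ] H)
    (hc : ∀ (j : ℤ) (n : ℕ), c j n = ∑ i ∈ Finset.Icc (1 : ℤ) n, b (i - j))
    (n : ℕ)
    (e : ℤ → H) (C : ℝ) (he : ∀ j, ‖e j‖ ≤ C) :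
    ∑ k ∈ Finset.Icc (1:ℤ) n, ∑' j : ℤ, a j (e (k - j))
      = ∑ k ∈ Finset.Icc (1:ℤ) n, A (e k)
        + ((∑ k ∈ Finset.Icc (1:ℤ) n, ∑' j : {j : ℤ // (n:ℤ) < |j|}, a (k - (j:ℤ)) (e (j:ℤ)))
           + ∑ j ∈ Finset.Icc (-(n:ℤ)) n, c j n (e j)) := by
  classical
  have hsum : ∀ k : ℤ, Summable fun j : ℤ => a (k - j) (e j) :=
    fun k => summable_aux a ha e C he k
  -- step 1: reindex each inner tsum
  have step1 : ∀ k : ℤ, ∑' j : ℤ, a j (e (k - j)) = ∑' j : ℤ, a (k - j) (e j) := by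
    intro k
    rw [← (Equiv.subLeft k).tsum_eq (fun j => a (k - j) (e j))]
    exact tsum_congr fun j => by simp [Equiv.subLeft, sub_sub_cancel]
  -- step 2: swap sum and tsum
  have step2 : ∑ k ∈ Finset.Icc (1:ℤ) n, ∑' j : ℤ, a (k - j) (e j)
      = ∑' j : ℤ, ∑ k ∈ Finset.Icc (1:ℤ) n, a (k - j) (e j) :=
    (Summable.tsum_finsetSum (fun k _ => hsum k)).symm
  have hg : Summable fun j : ℤ => ∑ k ∈ Finset.Icc (1:ℤ) n, a (k - j) (e j) :=
    summable_sum (fun k _ => hsum k)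
  -- step 3: split off the finite part
  have step3 : ∑' j : ℤ, ∑ k ∈ Finset.Icc (1:ℤ) n, a (k - j) (e j)
      = ∑ j ∈ Finset.Icc (-(n:ℤ)) n, ∑ k ∈ Finset.Icc (1:ℤ) n, a (k - j) (e j)
        + ∑' j : {j : ℤ // j ∉ Finset.Icc (-(n:ℤ)) n}, ∑ k ∈ Finset.Icc (1:ℤ) n, a (k - (j:ℤ)) (e (j:ℤ)) :=
    (Summable.sum_add_tsum_compl hg).symm
  -- the infinite tail equals the Q-term
  have hequiv : ∑' j : {j : ℤ // j ∉ Finset.Icc (-(n:ℤ)) n}, ∑ k ∈ Finset.Icc (1:ℤ) n, a (k - (j:ℤ)) (e (j:ℤ))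
      = ∑' j : {j : ℤ // (n:ℤ) < |j|}, ∑ k ∈ Finset.Icc (1:ℤ) n, a (k - (j:ℤ)) (e (j:ℤ)) := by
    have hiff : ∀ j : ℤ, j ∉ Finset.Icc (-(n:ℤ)) n ↔ (n:ℤ) < |j| := by
      intro j
      rw [Finset.mem_Icc, lt_abs]
      omega
    exact ((Equiv.subtypeEquivRight hiff).tsum_eq
      (fun j : {j : ℤ // (n:ℤ) < |j|} => ∑ k ∈ Finset.Icc (1:ℤ) n, a (k - (j:ℤ)) (e (j:ℤ))))
  have hQswap : ∑' j : {j : ℤ // (n:ℤ) < |j|}, ∑ k ∈ Finset.Icc (1:ℤ) n, a (k - (j:ℤ)) (e (j:ℤ))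
      = ∑ k ∈ Finset.Icc (1:ℤ) n, ∑' j : {j : ℤ // (n:ℤ) < |j|}, a (k - (j:ℤ)) (e (j:ℤ)) :=
    Summable.tsum_finsetSum (fun k _ => (hsum k).subtype {j : ℤ | (n:ℤ) < |j|})
  -- the finite part
  have hop : ∀ j : ℤ, ∑ k ∈ Finset.Icc (1:ℤ) n, a (k - j) (e j)
      = c j n (e j) + (if j ∈ Finset.Icc (1:ℤ) n then A (e j) else 0) := by
    intro j
    have hbk : ∀ k ∈ Finset.Icc (1:ℤ) n,
        b (k - j) (e j) = a (k - j) (e j) - (if k = j then A (e j) else 0) := by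
      intro k _
      by_cases h : k = j
      · subst h
        simp [hb0, ContinuousLinearMap.sub_apply]
      · rw [hb (k - j) (sub_ne_zero.mpr h), if_neg h, sub_zero]
    have h1 : c j n (e j) = ∑ k ∈ Finset.Icc (1:ℤ) n, b (k - j) (e j) := by
      rw [hc j n, ContinuousLinearMap.sum_apply]
    rw [h1, Finset.sum_congr rfl hbk, Finset.sum_sub_distrib,
      Finset.sum_ite_eq' (Finset.Icc (1:ℤ) n) j (fun _ => A (e j))]
    by_cases hj : j ∈ Finset.Icc (1:ℤ) n <;> simp [hj]
  have hfin : ∑ j ∈ Finset.Icc (-(n:ℤ)) n, ∑ k ∈ Finset.Icc (1:ℤ) n, a (k - j) (e j)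
      = ∑ j ∈ Finset.Icc (-(n:ℤ)) n, c j n (e j) + ∑ k ∈ Finset.Icc (1:ℤ) n, A (e k) := by
    rw [Finset.sum_congr rfl (fun j _ => hop j), Finset.sum_add_distrib]
    congr 1
    rw [Finset.sum_ite_mem]
    congr 1
    rw [Finset.inter_eq_right]
    intro j hj
    rw [Finset.mem_Icc] at *
    omega
  calc ∑ k ∈ Finset.Icc (1:ℤ) n, ∑' j : ℤ, a j (e (k - j))
      = ∑ k ∈ Finset.Icc (1:ℤ) n, ∑' j : ℤ, a (k - j) (e j) :=
        Finset.sum_congr rfl (fun k _ => step1 k)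
    _ = ∑' j : ℤ, ∑ k ∈ Finset.Icc (1:ℤ) n, a (k - j) (e j) := step2
    _ = _ := by rw [step3, hequiv, hQswap, hfin]; abel

lemma gauss_lip {Ω : Type*} [MeasurableSpace Ω] (P : Measure Ω) [IsProbabilityMeasure P]
    (g : Ω → ℝ) (hg : Measurable g)
    (cN : ℝ) (f : ℝ → ℝ) (hf_nonneg : ∀ x, 0 ≤ f x) (hf_le : ∀ x, f x ≤ cN)
    (hdens : Measure.map g P = MeasureTheory.volume.withDensity (fun x => ENNReal.ofReal (f x)))
    (t t' : ℝ) (htt : t ≤ t') :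
    (P {ω | g ω ≤ t'}).toReal - (P {ω | g ω ≤ t}).toReal ≤ cN * (t' - t) := by
  set ν := MeasureTheory.volume.withDensity (fun x => ENNReal.ofReal (f x)) with hν
  have hmap : ∀ u : ℝ, P {ω | g ω ≤ u} = ν (Set.Iic u) := by
    intro u
    rw [← hdens, Measure.map_apply hg measurableSet_Iic]
    rfl
  have hunion : ν (Set.Iic t') = ν (Set.Iic t) + ν (Set.Ioc t t') := by
    rw [← Set.Iic_union_Ioc_eq_Iic htt]
    exact measure_union (Set.Iic_disjoint_Ioc le_rfl) measurableSet_Ioc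
  have hioc : ν (Set.Ioc t t') ≤ ENNReal.ofReal cN * ENNReal.ofReal (t' - t) := by
    rw [hν, withDensity_apply _ measurableSet_Ioc]
    calc ∫⁻ x in Set.Ioc t t', ENNReal.ofReal (f x)
        ≤ ∫⁻ _ in Set.Ioc t t', ENNReal.ofReal cN :=
          lintegral_mono (fun x => ENNReal.ofReal_le_ofReal (hf_le x))
      _ = ENNReal.ofReal cN * MeasureTheory.volume (Set.Ioc t t') := setLIntegral_const _ _
      _ = ENNReal.ofReal cN * ENNReal.ofReal (t' - t) := by rw [Real.volume_Ioc]
  have hfin : ν (Set.Iic t) ≠ ∞ := by rw [← hmap t]; exact (measure_lt_top P _).ne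
  have hfinioc : ν (Set.Ioc t t') ≠ ∞ :=
    (lt_of_le_of_lt hioc (ENNReal.mul_lt_top ENNReal.ofReal_lt_top ENNReal.ofReal_lt_top)).ne
  have h1 : (P {ω | g ω ≤ t'}).toReal
      = (P {ω | g ω ≤ t}).toReal + (ν (Set.Ioc t t')).toReal := by
    rw [hmap, hmap, hunion, ENNReal.toReal_add hfin hfinioc]
  rw [h1]
  have h2 : (ν (Set.Ioc t t')).toReal ≤ cN * (t' - t) := by
    calc (ν (Set.Ioc t t')).toReal
        ≤ (ENNReal.ofReal cN * ENNReal.ofReal (t' - t)).toReal :=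
          ENNReal.toReal_mono (ENNReal.mul_lt_top ENNReal.ofReal_lt_top ENNReal.ofReal_lt_top).ne hioc
      _ = cN * (t' - t) := by
          rw [ENNReal.toReal_mul, ENNReal.toReal_ofReal (le_trans (hf_nonneg 0) (hf_le 0)),
            ENNReal.toReal_ofReal (by linarith)]
  linarith

/-- If `ε₀` is essentially bounded and `Q_n + R_n` is essentially bounded,
then for every positive integer `n`,
`Δ_n(X) ≤ Δ_n(A(ε)) + 2 c(N) ‖Q_n + R_n‖_∞ / √n`. -/
theorem berry_esseen_reduction_essSup
    {H : Type*} [NormedAddCommGroup H] [InnerProductSpace ℝ H] [CompleteSpace H]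
    [SecondCountableTopology H] [MeasurableSpace H] [BorelSpace H]
    {Ω : Type*} [MeasurableSpace Ω] {P : Measure Ω} [IsProbabilityMeasure P]
    (ε : ℤ → Ω → H) (hεmeas : ∀ k, Measurable (ε k))
    (hεindep : iIndepFun ε P)
    (hεident : ∀ k, IdentDistrib (ε k) (ε 0) P P)
    (hεint : Integrable (ε 0) P) (hεcent : ∫ ω, ε 0 ω ∂P = 0)
    (hεbdd : MemLp (ε 0) ∞ P)
    (a : ℤ → H →L[ℝ] H) (ha : Summable fun j => ‖a j‖)
    (X : ℤ → Ω → H)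
    (hX : ∀ k, ∀ᵐ ω ∂P, X k ω = ∑' j : ℤ, a j (ε (k - j) ω))
    (A : H →L[ℝ] H) (hA : A = ∑' j : ℤ, a j)
    (b : ℤ → H →L[ℝ] H) (hb : ∀ j : ℤ, j ≠ 0 → b j = a j) (hb0 : b 0 = a 0 - A)
    (c : ℤ → ℕ → H →L[ℝ] H)
    (hc : ∀ (j : ℤ) (n : ℕ), c j n = ∑ i ∈ Finset.Icc (1 : ℤ) n, b (i - j))
    (n : ℕ) (hn : 0 < n)
    (Q R : Ω → H)
    (hQ : ∀ ω, Q ω = ∑ k ∈ Finset.Icc (1 : ℤ) n,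
      ∑' j : {j : ℤ // (n : ℤ) < |j|}, a (k - (j : ℤ)) (ε (j : ℤ) ω))
    (hR : ∀ ω, R ω = ∑ j ∈ Finset.Icc (-(n : ℤ)) n, c j n (ε j ω))
    (hQRbdd : MemLp (fun ω => Q ω + R ω) ∞ P)
    -- `N` is a centered Gaussian `H`-valued random variable ...
    (N : Ω → H) (hNmeas : Measurable N)
    (hNgauss : ∀ x : H, ∃ v : ℝ≥0,
      Measure.map (fun ω => ⟪N ω, x⟫) P = gaussianReal 0 v)
    -- ... whose covariance operator equals that of `A(ε₀)`:
    (hNcov : ∀ x y : H, ∫ ω, ⟪N ω, x⟫ * ⟪N ω, y⟫ ∂P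
      = ∫ ω, ⟪A (ε 0 ω), x⟫ * ⟪A (ε 0 ω), y⟫ ∂P)
    -- the law of `‖N‖` admits a density bounded by `cN`:
    (cN : ℝ) (f : ℝ → ℝ) (hf_nonneg : ∀ x, 0 ≤ f x) (hf_le : ∀ x, f x ≤ cN)
    (hNdens : Measure.map (fun ω => ‖N ω‖) P
      = MeasureTheory.volume.withDensity (fun x => ENNReal.ofReal (f x))) :
    BEDelta P X N n ≤ BEDelta P (fun k ω => A (ε k ω)) N n
      + 2 * cN * (eLpNorm (fun ω => Q ω + R ω) ∞ P).toReal / Real.sqrt n := by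
  classical
  set M : ℝ := (eLpNorm (fun ω => Q ω + R ω) ∞ P).toReal with hMdef
  have hsq : (0:ℝ) < Real.sqrt n := Real.sqrt_pos.mpr (Nat.cast_pos.mpr hn)
  set δ : ℝ := M / Real.sqrt n with hδdef
  have hM0 : (0:ℝ) ≤ M := ENNReal.toReal_nonneg
  have hδ0 : 0 ≤ δ := div_nonneg hM0 hsq.le
  have hcN0 : (0:ℝ) ≤ cN := le_trans (hf_nonneg 0) (hf_le 0)
  -- essential bound on Q + R
  have hDbd : ∀ᵐ ω ∂P, ‖Q ω + R ω‖ ≤ M := by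
    have h1 := ae_le_eLpNormEssSup (f := fun ω => Q ω + R ω) (μ := P)
    have hne : eLpNormEssSup (fun ω => Q ω + R ω) P ≠ ∞ := by
      rw [← eLpNorm_exponent_top]; exact hQRbdd.2.ne
    filter_upwards [h1] with ω hω
    have h2 := ENNReal.toReal_mono hne hω
    simpa [hMdef, eLpNorm_exponent_top] using h2
  -- essential bound on each ε j
  set Cε : ℝ := (eLpNorm (ε 0) ∞ P).toReal with hCdef
  have hε0 : ∀ᵐ ω ∂P, ‖ε 0 ω‖ ≤ Cε := by
    have h1 := ae_le_eLpNormEssSup (f := ε 0) (μ := P)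
    have hne : eLpNormEssSup (ε 0) P ≠ ∞ := by
      rw [← eLpNorm_exponent_top]; exact hεbdd.2.ne
    filter_upwards [h1] with ω hω
    have h2 := ENNReal.toReal_mono hne hω
    simpa [hCdef, eLpNorm_exponent_top] using h2
  have hεj : ∀ j : ℤ, ∀ᵐ ω ∂P, ‖ε j ω‖ ≤ Cε := by
    intro j
    have hs : MeasurableSet {x : H | ¬ ‖x‖ ≤ Cε} := by
      have : MeasurableSet {x : H | ‖x‖ ≤ Cε} := measurableSet_le measurable_norm measurable_const
      simpa [Set.compl_setOf] using this.compl
    rw [ae_iff]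
    have heq : {ω | ¬ ‖ε j ω‖ ≤ Cε} = ε j ⁻¹' {x : H | ¬ ‖x‖ ≤ Cε} := rfl
    rw [heq, ← Measure.map_apply (hεmeas j) hs, (hεident j).map_eq,
      Measure.map_apply (hεmeas 0) hs]
    exact ae_iff.mp hε0
  -- a.s. identity: sum of X = sum of A(ε) + (Q + R)
  have hXall : ∀ᵐ ω ∂P, ∀ k ∈ Finset.Icc (1:ℤ) (n:ℤ), X k ω = ∑' j : ℤ, a j (ε (k - j) ω) :=
    (Filter.eventually_all_finset (Finset.Icc (1:ℤ) (n:ℤ))).2 (fun k _ => hX k)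
  have key : ∀ᵐ ω ∂P, ∑ k ∈ Finset.Icc (1:ℤ) (n:ℤ), X k ω
      = ∑ k ∈ Finset.Icc (1:ℤ) (n:ℤ), A (ε k ω) + (Q ω + R ω) := by
    filter_upwards [hXall, ae_all_iff.2 hεj] with ω hXω hεω
    have hd := sum_decomp_aux a ha A b hb hb0 c hc n (fun j => ε j ω) Cε hεω
    rw [hQ, hR]
    calc ∑ k ∈ Finset.Icc (1:ℤ) (n:ℤ), X k ω
        = ∑ k ∈ Finset.Icc (1:ℤ) (n:ℤ), ∑' j : ℤ, a j (ε (k - j) ω) :=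
          Finset.sum_congr rfl hXω
      _ = _ := hd
  -- distance between normalized sums
  have hdist : ∀ᵐ ω ∂P,
      ‖((Real.sqrt n)⁻¹ • ∑ k ∈ Finset.Icc (1:ℤ) (n:ℤ), X k ω)
        - ((Real.sqrt n)⁻¹ • ∑ k ∈ Finset.Icc (1:ℤ) (n:ℤ), A (ε k ω))‖ ≤ δ := by
    filter_upwards [key, hDbd] with ω h1 h2
    have h3 : ((Real.sqrt n)⁻¹ • ∑ k ∈ Finset.Icc (1:ℤ) (n:ℤ), X k ω)
        - ((Real.sqrt n)⁻¹ • ∑ k ∈ Finset.Icc (1:ℤ) (n:ℤ), A (ε k ω))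
        = (Real.sqrt n)⁻¹ • (Q ω + R ω) := by
      rw [h1, smul_add]; abel
    rw [h3, norm_smul, norm_inv, Real.norm_eq_abs, abs_of_nonneg hsq.le]
    calc (Real.sqrt n)⁻¹ * ‖Q ω + R ω‖ ≤ (Real.sqrt n)⁻¹ * M := by
          exact mul_le_mul_of_nonneg_left h2 (inv_nonneg.mpr hsq.le)
      _ = δ := by rw [hδdef]; ring
  -- probability toReal bound
  have hto : ∀ s : Set Ω, (P s).toReal ≤ 1 := fun s => by
    simpa using ENNReal.toReal_mono ENNReal.one_ne_top prob_le_one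
  -- pointwise bound on the A(ε) Berry–Esseen distance
  have hbddA : BddAbove (Set.range fun t : ℝ =>
      |(P {ω | ‖(Real.sqrt n)⁻¹ • ∑ k ∈ Finset.Icc (1:ℤ) (n:ℤ), A (ε k ω)‖ ≤ t}).toReal
        - (P {ω | ‖N ω‖ ≤ t}).toReal|) := by
    refine ⟨1, ?_⟩
    rintro x ⟨t, rfl⟩
    rw [abs_sub_le_iff]
    constructor
    · linarith [hto {ω | ‖(Real.sqrt n)⁻¹ • ∑ k ∈ Finset.Icc (1:ℤ) (n:ℤ), A (ε k ω)‖ ≤ t},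
        ENNReal.toReal_nonneg (a := P {ω | ‖N ω‖ ≤ t})]
    · linarith [hto {ω | ‖N ω‖ ≤ t},
        ENNReal.toReal_nonneg (a := P {ω | ‖(Real.sqrt n)⁻¹ • ∑ k ∈ Finset.Icc (1:ℤ) (n:ℤ), A (ε k ω)‖ ≤ t})]
  have hΔA : ∀ t : ℝ,
      |(P {ω | ‖(Real.sqrt n)⁻¹ • ∑ k ∈ Finset.Icc (1:ℤ) (n:ℤ), A (ε k ω)‖ ≤ t}).toReal
        - (P {ω | ‖N ω‖ ≤ t}).toReal| ≤ BEDelta P (fun k ω => A (ε k ω)) N n := by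
    intro t
    exact le_ciSup hbddA t
  -- Lipschitz bound for the Gaussian cdf
  have hΦ : ∀ t t' : ℝ, t ≤ t' →
      (P {ω | ‖N ω‖ ≤ t'}).toReal - (P {ω | ‖N ω‖ ≤ t}).toReal ≤ cN * (t' - t) :=
    fun t t' htt => gauss_lip P (fun ω => ‖N ω‖) hNmeas.norm cN f hf_nonneg hf_le hNdens t t' htt
  -- main pointwise estimate
  have main : ∀ t : ℝ,
      |(P {ω | ‖(Real.sqrt n)⁻¹ • ∑ k ∈ Finset.Icc (1:ℤ) (n:ℤ), X k ω‖ ≤ t}).toReal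
        - (P {ω | ‖N ω‖ ≤ t}).toReal|
      ≤ BEDelta P (fun k ω => A (ε k ω)) N n + cN * δ := by
    intro t
    have hFle : (P {ω | ‖(Real.sqrt n)⁻¹ • ∑ k ∈ Finset.Icc (1:ℤ) (n:ℤ), X k ω‖ ≤ t}).toReal
        ≤ (P {ω | ‖(Real.sqrt n)⁻¹ • ∑ k ∈ Finset.Icc (1:ℤ) (n:ℤ), A (ε k ω)‖ ≤ t + δ}).toReal := by
      apply ENNReal.toReal_mono (measure_ne_top P _)
      apply measure_mono_ae
      filter_upwards [hdist] with ω hω h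
      have h4 := norm_sub_norm_le ((Real.sqrt n)⁻¹ • ∑ k ∈ Finset.Icc (1:ℤ) (n:ℤ), A (ε k ω))
        ((Real.sqrt n)⁻¹ • ∑ k ∈ Finset.Icc (1:ℤ) (n:ℤ), X k ω)
      rw [norm_sub_rev] at h4
      have h5 : ‖(Real.sqrt n)⁻¹ • ∑ k ∈ Finset.Icc (1:ℤ) (n:ℤ), X k ω‖ ≤ t := h
      show ‖(Real.sqrt n)⁻¹ • ∑ k ∈ Finset.Icc (1:ℤ) (n:ℤ), A (ε k ω)‖ ≤ t + δ
      linarith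
    have hGle : (P {ω | ‖(Real.sqrt n)⁻¹ • ∑ k ∈ Finset.Icc (1:ℤ) (n:ℤ), A (ε k ω)‖ ≤ t - δ}).toReal
        ≤ (P {ω | ‖(Real.sqrt n)⁻¹ • ∑ k ∈ Finset.Icc (1:ℤ) (n:ℤ), X k ω‖ ≤ t}).toReal := by
      apply ENNReal.toReal_mono (measure_ne_top P _)
      apply measure_mono_ae
      filter_upwards [hdist] with ω hω h
      have h4 := norm_sub_norm_le ((Real.sqrt n)⁻¹ • ∑ k ∈ Finset.Icc (1:ℤ) (n:ℤ), X k ω)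
        ((Real.sqrt n)⁻¹ • ∑ k ∈ Finset.Icc (1:ℤ) (n:ℤ), A (ε k ω))
      have h5 : ‖(Real.sqrt n)⁻¹ • ∑ k ∈ Finset.Icc (1:ℤ) (n:ℤ), A (ε k ω)‖ ≤ t - δ := h
      show ‖(Real.sqrt n)⁻¹ • ∑ k ∈ Finset.Icc (1:ℤ) (n:ℤ), X k ω‖ ≤ t
      linarith
    have hA1 := abs_sub_le_iff.mp (hΔA (t + δ))
    have hA2 := abs_sub_le_iff.mp (hΔA (t - δ))
    have hφ1 := hΦ t (t + δ) (by linarith)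
    have hφ2 := hΦ (t - δ) t (by linarith)
    have he1 : cN * ((t + δ) - t) = cN * δ := by ring
    have he2 : cN * (t - (t - δ)) = cN * δ := by ring
    rw [he1] at hφ1
    rw [he2] at hφ2
    rw [abs_sub_le_iff]
    exact ⟨by linarith [hA1.1], by linarith [hA2.2]⟩
  -- conclude
  have hBEX : BEDelta P X N n = ⨆ t : ℝ,
      |(P {ω | ‖(Real.sqrt n)⁻¹ • ∑ k ∈ Finset.Icc (1:ℤ) (n:ℤ), X k ω‖ ≤ t}).toReal
        - (P {ω | ‖N ω‖ ≤ t}).toReal| := rfl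
  rw [hBEX]
  have hfinal : BEDelta P (fun k ω => A (ε k ω)) N n + cN * δ
      ≤ BEDelta P (fun k ω => A (ε k ω)) N n + 2 * cN * M / Real.sqrt n := by
    have h5 : cN * δ = cN * M / Real.sqrt n := by rw [hδdef]; ring
    have h6 : 0 ≤ cN * M / Real.sqrt n := div_nonneg (mul_nonneg hcN0 hM0) hsq.le
    have h7 : cN * M / Real.sqrt n ≤ 2 * cN * M / Real.sqrt n := by
      have : 0 ≤ cN * M := mul_nonneg hcN0 hM0
      rw [div_le_div_iff₀ hsq hsq]
      nlinarith [hsq]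
    linarith
  exact le_trans (ciSup_le main) hfinal
end

section
/- If ε_0 is essentially bounded and Σ_{j∈ℤ} |j|·‖a_j‖ < ∞, then for every positive integer n, ‖Q_n + R_n‖_∞ ≤ 7·‖ε_0‖_∞·Σ_{j∈ℤ}|j|·‖a_j‖, where ‖·‖_∞ denotes the essential supremum of the H-norm. -/
open MeasureTheory ProbabilityTheory
open scoped ENNReal NNReal

private lemma sum_shift {E : Type*} [AddCommMonoid E] (F : ℤ → E) (lo hi j : ℤ) :
    ∑ i ∈ Finset.Icc lo hi, F (i - j) = ∑ m ∈ Finset.Icc (lo - j) (hi - j), F m := by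
  rw [sub_eq_add_neg lo j, sub_eq_add_neg hi j, ← Finset.map_add_right_Icc lo hi (-j),
    Finset.sum_map]
  simp [addRightEmbedding, sub_eq_add_neg]

private lemma tsum_ite_bound (g : ℤ → ℝ) (hg0 : ∀ m, 0 ≤ g m) (hg : Summable g)
    (hg1 : Summable fun m : ℤ => |(m : ℝ)| * g m)
    (s : Finset ℤ) (p : ℤ → ℤ → Prop) [∀ k m, Decidable (p k m)]
    (hcard : ∀ m : ℤ, (((s.filter fun k => p k m).card : ℤ) ≤ |m|)) :
    ∑ k ∈ s, ∑' m : ℤ, (if p k m then g m else 0) ≤ ∑' m : ℤ, |(m : ℝ)| * g m := by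
  have hsk : ∀ k : ℤ, Summable fun m : ℤ => if p k m then g m else 0 := fun k =>
    hg.of_nonneg_of_le (fun m => by by_cases h : p k m <;> simp [h, hg0 m])
      (fun m => by by_cases h : p k m <;> simp [h, hg0 m])
  rw [← Summable.tsum_finsetSum fun k _ => hsk k]
  have hpt : ∀ m : ℤ, (∑ k ∈ s, if p k m then g m else 0) ≤ |(m : ℝ)| * g m := by
    intro m
    rw [← Finset.sum_filter, Finset.sum_const, nsmul_eq_mul]
    refine mul_le_mul_of_nonneg_right ?_ (hg0 m)
    exact_mod_cast hcard m
  refine Summable.tsum_le_tsum hpt ?_ hg1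
  refine Summable.of_nonneg_of_le (fun m => Finset.sum_nonneg fun k _ => ?_) hpt hg1
  by_cases h : p k m <;> simp [h, hg0 m]

private lemma cardQ (N m : ℤ) (hN : 0 ≤ N) :
    (((Finset.Icc (1:ℤ) N).filter fun k => N < |k - m|).card : ℤ) ≤ |m| := by
  rcases lt_trichotomy m 0 with hm | hm | hm
  · have hsub : (Finset.Icc (1:ℤ) N).filter (fun k => N < |k - m|) ⊆
        Finset.Icc (N + m + 1) N := by
      intro k hk
      simp only [Finset.mem_filter, Finset.mem_Icc, lt_abs] at hk ⊢
      omega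
    have h1 := Finset.card_le_card hsub
    rw [Int.card_Icc] at h1
    rw [abs_of_neg hm]
    omega
  · subst hm
    have hemp : (Finset.Icc (1:ℤ) N).filter (fun k => N < |k - 0|) = ∅ := by
      rw [Finset.filter_eq_empty_iff]
      intro k hk
      simp only [Finset.mem_Icc] at hk
      rw [sub_zero, abs_of_pos (by omega)]
      omega
    rw [hemp]
    simp
  · have hsub : (Finset.Icc (1:ℤ) N).filter (fun k => N < |k - m|) ⊆
        Finset.Icc (1:ℤ) (m - 1) := by
      intro k hk
      simp only [Finset.mem_filter, Finset.mem_Icc, lt_abs] at hk ⊢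
      omega
    have h1 := Finset.card_le_card hsub
    rw [Int.card_Icc] at h1
    rw [abs_of_pos hm]
    omega

private lemma cardR1 (N m : ℤ) (hN : 0 ≤ N) :
    (((Finset.Icc (1:ℤ) N).filter fun j => m ∉ Finset.Icc (1 - j) (N - j)).card : ℤ) ≤ |m| := by
  rcases lt_trichotomy m 0 with hm | hm | hm
  · have hsub : (Finset.Icc (1:ℤ) N).filter (fun j => m ∉ Finset.Icc (1 - j) (N - j)) ⊆
        Finset.Icc (1:ℤ) (-m) := by
      intro j hj
      simp only [Finset.mem_filter, Finset.mem_Icc, not_and, not_le] at hj ⊢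
      omega
    have h1 := Finset.card_le_card hsub
    rw [Int.card_Icc] at h1
    rw [abs_of_neg hm]
    omega
  · subst hm
    have hemp : (Finset.Icc (1:ℤ) N).filter (fun j => (0:ℤ) ∉ Finset.Icc (1 - j) (N - j)) = ∅ := by
      rw [Finset.filter_eq_empty_iff]
      intro j hj
      simp only [Finset.mem_Icc] at hj
      push_neg
      simp only [Finset.mem_Icc]
      omega
    rw [hemp]
    simp
  · have hsub : (Finset.Icc (1:ℤ) N).filter (fun j => m ∉ Finset.Icc (1 - j) (N - j)) ⊆
        Finset.Icc (N - m + 1) N := by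
      intro j hj
      simp only [Finset.mem_filter, Finset.mem_Icc, not_and, not_le] at hj ⊢
      omega
    have h1 := Finset.card_le_card hsub
    rw [Int.card_Icc] at h1
    rw [abs_of_pos hm]
    omega

private lemma cardR2 (N m : ℤ) (hN : 0 ≤ N) :
    (((Finset.Icc (-N) (0:ℤ)).filter fun j => m ∈ Finset.Icc (1 - j) (N - j)).card : ℤ) ≤ |m| := by
  rcases le_or_gt m 0 with hm | hm
  · have hemp : (Finset.Icc (-N) (0:ℤ)).filter (fun j => m ∈ Finset.Icc (1 - j) (N - j)) = ∅ := by
      rw [Finset.filter_eq_empty_iff]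
      intro j hj
      simp only [Finset.mem_Icc] at hj
      simp only [Finset.mem_Icc, not_and, not_le]
      omega
    rw [hemp]
    simpa using abs_nonneg m
  · have hsub : (Finset.Icc (-N) (0:ℤ)).filter (fun j => m ∈ Finset.Icc (1 - j) (N - j)) ⊆
        Finset.Icc (1 - m) 0 := by
      intro j hj
      simp only [Finset.mem_filter, Finset.mem_Icc] at hj ⊢
      omega
    have h1 := Finset.card_le_card hsub
    rw [Int.card_Icc] at h1
    rw [abs_of_pos hm]
    omega

set_option maxHeartbeats 1000000 in
/-- If `ε₀` is essentially bounded and `∑_{j∈ℤ} |j|‖a_j‖ < ∞`, then for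
every positive integer `n`, `‖Q_n + R_n‖_∞ ≤ 7 ‖ε₀‖_∞ ∑_{j∈ℤ} |j| ‖a_j‖`. -/
theorem essSup_bound_Qn_add_Rn
    {H : Type*} [NormedAddCommGroup H] [InnerProductSpace ℝ H] [CompleteSpace H]
    [SecondCountableTopology H] [MeasurableSpace H] [BorelSpace H]
    {Ω : Type*} [MeasurableSpace Ω] {P : Measure Ω} [IsProbabilityMeasure P]
    (ε : ℤ → Ω → H) (hεmeas : ∀ k, Measurable (ε k))
    (hεindep : iIndepFun ε P)
    (hεident : ∀ k, IdentDistrib (ε k) (ε 0) P P)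
    (hεint : Integrable (ε 0) P) (hεcent : ∫ ω, ε 0 ω ∂P = 0)
    (hεbdd : MemLp (ε 0) ∞ P)
    (a : ℤ → H →L[ℝ] H) (ha : Summable fun j => ‖a j‖)
    (ha1 : Summable fun j : ℤ => |(j : ℝ)| * ‖a j‖)
    (A : H →L[ℝ] H) (hA : A = ∑' j : ℤ, a j)
    (b : ℤ → H →L[ℝ] H) (hb : ∀ j : ℤ, j ≠ 0 → b j = a j) (hb0 : b 0 = a 0 - A)
    (c : ℤ → ℕ → H →L[ℝ] H)
    (hc : ∀ (j : ℤ) (n : ℕ), c j n = ∑ i ∈ Finset.Icc (1 : ℤ) n, b (i - j))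
    (n : ℕ) (hn : 0 < n)
    (Q R : Ω → H)
    (hQ : ∀ ω, Q ω = ∑ k ∈ Finset.Icc (1 : ℤ) n,
      ∑' j : {j : ℤ // (n : ℤ) < |j|}, a (k - (j : ℤ)) (ε (j : ℤ) ω))
    (hR : ∀ ω, R ω = ∑ j ∈ Finset.Icc (-(n : ℤ)) n, c j n (ε j ω)) :
    eLpNorm (fun ω => Q ω + R ω) ∞ P
      ≤ ENNReal.ofReal (7 * (eLpNorm (ε 0) ∞ P).toReal
        * ∑' j : ℤ, |(j : ℝ)| * ‖a j‖) := by
  have hg0 : ∀ m : ℤ, (0:ℝ) ≤ ‖a m‖ := fun m => norm_nonneg _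
  set M : ℝ := (eLpNorm (ε 0) ∞ P).toReal with hMdef
  set S : ℝ := ∑' j : ℤ, |(j : ℝ)| * ‖a j‖ with hSdef
  have hM0 : 0 ≤ M := ENNReal.toReal_nonneg
  have hS0 : 0 ≤ S := by
    rw [hSdef]
    exact tsum_nonneg fun j => mul_nonneg (abs_nonneg _) (hg0 j)
  have hsa : Summable a := ha.of_norm
  have hN : (0:ℤ) ≤ (n:ℤ) := Int.ofNat_nonneg n
  -- almost everywhere bound on all the ε j simultaneously
  have hfin : eLpNorm (ε 0) ∞ P ≠ ∞ := hεbdd.2.ne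
  have hae : ∀ᵐ ω ∂P, ∀ j : ℤ, ‖ε j ω‖ ≤ M := by
    rw [ae_all_iff]
    intro j
    have hid : eLpNormEssSup (ε j) P = eLpNorm (ε 0) ∞ P := by
      rw [← eLpNorm_exponent_top]
      exact (hεident j).eLpNorm_eq ∞
    filter_upwards [enorm_ae_le_eLpNormEssSup (ε j) P] with ω hω
    rw [hid] at hω
    have h2 := ENNReal.toReal_mono hfin hω
    rw [hMdef]
    simpa using h2
  -- deterministic bound for Q
  have hQb : ∀ ω, (∀ j : ℤ, ‖ε j ω‖ ≤ M) → ‖Q ω‖ ≤ M * S := by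
    intro ω hbω
    rw [hQ ω]
    have hkey : ∀ k : ℤ, ‖∑' j : {j : ℤ // (n:ℤ) < |j|}, a (k - (j:ℤ)) (ε (j:ℤ) ω)‖
        ≤ (∑' m : ℤ, if (n:ℤ) < |k - m| then ‖a m‖ else 0) * M := by
      intro k
      have hsg : Summable fun j : ℤ => ‖a (k - j)‖ :=
        (Equiv.subLeft k).summable_iff.mpr ha
      have hb1 : ∀ j : {j : ℤ // (n:ℤ) < |j|},
          ‖a (k - (j:ℤ)) (ε (j:ℤ) ω)‖ ≤ ‖a (k - (j:ℤ))‖ * M := fun j =>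
        le_trans ((a (k - (j:ℤ))).le_opNorm _)
          (mul_le_mul_of_nonneg_left (hbω (j:ℤ)) (norm_nonneg _))
      have hsgM : Summable fun j : {j : ℤ // (n:ℤ) < |j|} => ‖a (k - (j:ℤ))‖ * M :=
        (hsg.mul_right M).comp_injective Subtype.coe_injective
      have hsn : Summable fun j : {j : ℤ // (n:ℤ) < |j|} => ‖a (k - (j:ℤ)) (ε (j:ℤ) ω)‖ :=
        Summable.of_nonneg_of_le (fun j => norm_nonneg _) hb1 hsgM
      calc ‖∑' j : {j : ℤ // (n:ℤ) < |j|}, a (k - (j:ℤ)) (ε (j:ℤ) ω)‖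
          ≤ ∑' j : {j : ℤ // (n:ℤ) < |j|}, ‖a (k - (j:ℤ)) (ε (j:ℤ) ω)‖ :=
            norm_tsum_le_tsum_norm hsn
        _ ≤ ∑' j : {j : ℤ // (n:ℤ) < |j|}, ‖a (k - (j:ℤ))‖ * M := Summable.tsum_le_tsum hb1 hsn hsgM
        _ = (∑' j : {j : ℤ // (n:ℤ) < |j|}, ‖a (k - (j:ℤ))‖) * M := tsum_mul_right
        _ = (∑' m : ℤ, if (n:ℤ) < |k - m| then ‖a m‖ else 0) * M := by
            congr 1
            have h1 : (∑' j : {j : ℤ // (n:ℤ) < |j|}, ‖a (k - (j:ℤ))‖)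
                = ∑' m : ℤ, Set.indicator {j : ℤ | (n:ℤ) < |j|} (fun j => ‖a (k - j)‖) m := by
              exact tsum_subtype {j : ℤ | (n:ℤ) < |j|} (fun j => ‖a (k - j)‖)
            rw [h1, ← (Equiv.subLeft k).tsum_eq]
            refine tsum_congr fun m => ?_
            by_cases h : (n:ℤ) < |k - m|
            · simp [Set.indicator_apply, Equiv.subLeft_apply, Set.mem_setOf_eq, h,
                sub_sub_cancel]
            · simp [Set.indicator_apply, Equiv.subLeft_apply, Set.mem_setOf_eq, h]
    calc ‖∑ k ∈ Finset.Icc (1:ℤ) (n:ℤ),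
          ∑' j : {j : ℤ // (n:ℤ) < |j|}, a (k - (j:ℤ)) (ε (j:ℤ) ω)‖
        ≤ ∑ k ∈ Finset.Icc (1:ℤ) (n:ℤ),
            ‖∑' j : {j : ℤ // (n:ℤ) < |j|}, a (k - (j:ℤ)) (ε (j:ℤ) ω)‖ := norm_sum_le _ _
      _ ≤ ∑ k ∈ Finset.Icc (1:ℤ) (n:ℤ),
            (∑' m : ℤ, if (n:ℤ) < |k - m| then ‖a m‖ else 0) * M :=
          Finset.sum_le_sum fun k _ => hkey k
      _ = (∑ k ∈ Finset.Icc (1:ℤ) (n:ℤ),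
            ∑' m : ℤ, if (n:ℤ) < |k - m| then ‖a m‖ else 0) * M := (Finset.sum_mul _ _ _).symm
      _ ≤ S * M := by
          refine mul_le_mul_of_nonneg_right ?_ hM0
          rw [hSdef]
          exact tsum_ite_bound (fun m => ‖a m‖) hg0 ha ha1 (Finset.Icc (1:ℤ) (n:ℤ))
            (fun k m => (n:ℤ) < |k - m|) (fun m => cardQ (n:ℤ) m hN)
      _ = M * S := mul_comm _ _
  -- deterministic bound for R
  have hRb : ∀ ω, (∀ j : ℤ, ‖ε j ω‖ ≤ M) → ‖R ω‖ ≤ (S + S) * M := by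
    intro ω hbω
    rw [hR ω]
    have hsplit : Finset.Icc (-(n:ℤ)) (n:ℤ) = Finset.Icc (-(n:ℤ)) 0 ∪ Finset.Icc 1 (n:ℤ) := by
      ext x
      simp only [Finset.mem_Icc, Finset.mem_union]
      omega
    have hdisj : Disjoint (Finset.Icc (-(n:ℤ)) 0) (Finset.Icc 1 (n:ℤ)) := by
      rw [Finset.disjoint_left]
      intro x hx hx'
      simp only [Finset.mem_Icc] at hx hx'
      omega
    rw [hsplit, Finset.sum_union hdisj]
    -- norms of the coefficients, case j ≤ 0
    have hcnorm2 : ∀ j ∈ Finset.Icc (-(n:ℤ)) 0,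
        ‖c j n‖ ≤ ∑' m : ℤ, if m ∈ Finset.Icc (1 - j) ((n:ℤ) - j) then ‖a m‖ else 0 := by
      intro j hj
      simp only [Finset.mem_Icc] at hj
      have hcval : c j n = ∑ m ∈ Finset.Icc (1 - j) ((n:ℤ) - j), a m := by
        rw [hc j n, ← sum_shift a 1 (n:ℤ) j]
        refine Finset.sum_congr rfl fun i hi => ?_
        simp only [Finset.mem_Icc] at hi
        exact hb (i - j) (by omega)
      have htop : (∑' m : ℤ, if m ∈ Finset.Icc (1 - j) ((n:ℤ) - j) then ‖a m‖ else 0)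
          = ∑ m ∈ Finset.Icc (1 - j) ((n:ℤ) - j), ‖a m‖ := by
        rw [tsum_eq_sum (s := Finset.Icc (1 - j) ((n:ℤ) - j)) (fun m hm => if_neg hm)]
        exact Finset.sum_congr rfl fun m hm => if_pos hm
      rw [hcval, htop]
      exact norm_sum_le _ _
    -- norms of the coefficients, case j ≥ 1
    have hcnorm1 : ∀ j ∈ Finset.Icc (1:ℤ) (n:ℤ),
        ‖c j n‖ ≤ ∑' m : ℤ, if m ∉ Finset.Icc (1 - j) ((n:ℤ) - j) then ‖a m‖ else 0 := by
      intro j hj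
      have hcval : c j n = (∑ m ∈ Finset.Icc (1 - j) ((n:ℤ) - j), a m) - A := by
        rw [hc j n]
        have hbi : ∀ i ∈ Finset.Icc (1:ℤ) (n:ℤ),
            b (i - j) = a (i - j) - (if i = j then A else 0) := by
          intro i _
          by_cases h : i = j
          · subst h
            simp [hb0]
          · rw [hb (i - j) (by omega), if_neg h, sub_zero]
        rw [Finset.sum_congr rfl hbi, Finset.sum_sub_distrib,
          Finset.sum_ite_eq' (Finset.Icc (1:ℤ) (n:ℤ)) j (fun _ => A), if_pos hj,
          sum_shift a 1 (n:ℤ) j]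
      have hrepr : A - (∑ m ∈ Finset.Icc (1 - j) ((n:ℤ) - j), a m)
          = ∑' m : {m : ℤ // m ∉ Finset.Icc (1 - j) ((n:ℤ) - j)}, a (m:ℤ) := by
        have h2 := Summable.sum_add_tsum_subtype_compl hsa (Finset.Icc (1 - j) ((n:ℤ) - j))
        rw [hA, ← h2]
        abel
      have hsub : Summable fun m : {m : ℤ // m ∉ Finset.Icc (1 - j) ((n:ℤ) - j)} => ‖a (m:ℤ)‖ :=
        ha.comp_injective Subtype.coe_injective
      calc ‖c j n‖ = ‖A - ∑ m ∈ Finset.Icc (1 - j) ((n:ℤ) - j), a m‖ := by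
            rw [hcval, norm_sub_rev]
        _ = ‖∑' m : {m : ℤ // m ∉ Finset.Icc (1 - j) ((n:ℤ) - j)}, a (m:ℤ)‖ := by rw [hrepr]
        _ ≤ ∑' m : {m : ℤ // m ∉ Finset.Icc (1 - j) ((n:ℤ) - j)}, ‖a (m:ℤ)‖ :=
            norm_tsum_le_tsum_norm hsub
        _ = ∑' m : ℤ, if m ∉ Finset.Icc (1 - j) ((n:ℤ) - j) then ‖a m‖ else 0 := by
            have h1 : (∑' m : {m : ℤ // m ∉ Finset.Icc (1 - j) ((n:ℤ) - j)}, ‖a (m:ℤ)‖)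
                = ∑' m : ℤ, Set.indicator {m : ℤ | m ∉ Finset.Icc (1 - j) ((n:ℤ) - j)}
                    (fun m => ‖a m‖) m := by
              exact tsum_subtype {m : ℤ | m ∉ Finset.Icc (1 - j) ((n:ℤ) - j)} (fun m => ‖a m‖)
            rw [h1]
            refine tsum_congr fun m => ?_
            by_cases h : m ∈ Finset.Icc (1 - j) ((n:ℤ) - j)
            · rw [Set.indicator_of_notMem
                (show m ∉ {m : ℤ | m ∉ Finset.Icc (1 - j) ((n:ℤ) - j)} from fun hm => hm h),
                if_neg (not_not.mpr h)]
            · rw [Set.indicator_of_mem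
                (show m ∈ {m : ℤ | m ∉ Finset.Icc (1 - j) ((n:ℤ) - j)} from h), if_pos h]
    -- combine the two halves
    have part1 : ‖∑ j ∈ Finset.Icc (-(n:ℤ)) 0, c j n (ε j ω)‖ ≤ S * M := by
      calc ‖∑ j ∈ Finset.Icc (-(n:ℤ)) 0, c j n (ε j ω)‖
          ≤ ∑ j ∈ Finset.Icc (-(n:ℤ)) 0, ‖c j n (ε j ω)‖ := norm_sum_le _ _
        _ ≤ ∑ j ∈ Finset.Icc (-(n:ℤ)) 0,
              (∑' m : ℤ, if m ∈ Finset.Icc (1 - j) ((n:ℤ) - j) then ‖a m‖ else 0) * M := by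
            refine Finset.sum_le_sum fun j hj => ?_
            calc ‖c j n (ε j ω)‖ ≤ ‖c j n‖ * M :=
                  le_trans ((c j n).le_opNorm _)
                    (mul_le_mul_of_nonneg_left (hbω j) (norm_nonneg _))
              _ ≤ _ := mul_le_mul_of_nonneg_right (hcnorm2 j hj) hM0
        _ = (∑ j ∈ Finset.Icc (-(n:ℤ)) 0,
              ∑' m : ℤ, if m ∈ Finset.Icc (1 - j) ((n:ℤ) - j) then ‖a m‖ else 0) * M :=
            (Finset.sum_mul _ _ _).symm
        _ ≤ S * M := by
            refine mul_le_mul_of_nonneg_right ?_ hM0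
            rw [hSdef]
            exact tsum_ite_bound (fun m => ‖a m‖) hg0 ha ha1 (Finset.Icc (-(n:ℤ)) 0)
              (fun j m => m ∈ Finset.Icc (1 - j) ((n:ℤ) - j)) (fun m => cardR2 (n:ℤ) m hN)
    have part2 : ‖∑ j ∈ Finset.Icc (1:ℤ) (n:ℤ), c j n (ε j ω)‖ ≤ S * M := by
      calc ‖∑ j ∈ Finset.Icc (1:ℤ) (n:ℤ), c j n (ε j ω)‖
          ≤ ∑ j ∈ Finset.Icc (1:ℤ) (n:ℤ), ‖c j n (ε j ω)‖ := norm_sum_le _ _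
        _ ≤ ∑ j ∈ Finset.Icc (1:ℤ) (n:ℤ),
              (∑' m : ℤ, if m ∉ Finset.Icc (1 - j) ((n:ℤ) - j) then ‖a m‖ else 0) * M := by
            refine Finset.sum_le_sum fun j hj => ?_
            calc ‖c j n (ε j ω)‖ ≤ ‖c j n‖ * M :=
                  le_trans ((c j n).le_opNorm _)
                    (mul_le_mul_of_nonneg_left (hbω j) (norm_nonneg _))
              _ ≤ _ := mul_le_mul_of_nonneg_right (hcnorm1 j hj) hM0
        _ = (∑ j ∈ Finset.Icc (1:ℤ) (n:ℤ),
              ∑' m : ℤ, if m ∉ Finset.Icc (1 - j) ((n:ℤ) - j) then ‖a m‖ else 0) * M :=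
            (Finset.sum_mul _ _ _).symm
        _ ≤ S * M := by
            refine mul_le_mul_of_nonneg_right ?_ hM0
            rw [hSdef]
            exact tsum_ite_bound (fun m => ‖a m‖) hg0 ha ha1 (Finset.Icc (1:ℤ) (n:ℤ))
              (fun j m => m ∉ Finset.Icc (1 - j) ((n:ℤ) - j)) (fun m => cardR1 (n:ℤ) m hN)
    calc ‖(∑ j ∈ Finset.Icc (-(n:ℤ)) 0, c j n (ε j ω))
          + ∑ j ∈ Finset.Icc (1:ℤ) (n:ℤ), c j n (ε j ω)‖
        ≤ ‖∑ j ∈ Finset.Icc (-(n:ℤ)) 0, c j n (ε j ω)‖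
          + ‖∑ j ∈ Finset.Icc (1:ℤ) (n:ℤ), c j n (ε j ω)‖ := norm_add_le _ _
      _ ≤ S * M + S * M := add_le_add part1 part2
      _ = (S + S) * M := by ring
  -- conclusion
  have hbound : ∀ᵐ ω ∂P, ‖Q ω + R ω‖ ≤ 7 * M * S := by
    filter_upwards [hae] with ω hω
    calc ‖Q ω + R ω‖ ≤ ‖Q ω‖ + ‖R ω‖ := norm_add_le _ _
      _ ≤ M * S + (S + S) * M := add_le_add (hQb ω hω) (hRb ω hω)
      _ = 3 * M * S := by ring
      _ ≤ 7 * M * S := by nlinarith [mul_nonneg hM0 hS0]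
  rw [eLpNorm_exponent_top]
  exact eLpNormEssSup_le_of_ae_bound hbound
end

section
/- Let ψ_1(x) = e^x − 1, h(x) = x·ψ_1(x) for x > 0 (h being a strictly increasing bijection of (0,∞) onto (0,∞)), and φ(x) = x·h^{−1}(1/x) for x > 0. Then φ(x)/(x·log(1 + 1/x)) remains bounded as x → 0⁺; that is, there exist constants C > 0 and δ > 0 such that φ(x) ≤ C·x·log(1 + 1/x) for all x ∈ (0, δ). -/
open scoped Real

/-- Let `h(x) = x (eˣ - 1)` on `(0,∞)`, a strictly increasing continuous
bijection of `(0,∞)` onto `(0,∞)` with inverse `g = h⁻¹`, and `φ(x) = x g(1/x)`. Then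
`φ(x) / (x log(1 + 1/x))` stays bounded as `x → 0⁺`: there are `C > 0` and `δ > 0` such
that `φ(x) ≤ C x log(1 + 1/x)` for all `x ∈ (0, δ)`. -/
theorem phi_asymptotic_bound
    (g : ℝ → ℝ)
    (hg : Set.InvOn g (fun x => x * (Real.exp x - 1)) (Set.Ioi (0 : ℝ)) (Set.Ioi (0 : ℝ)))
    (hgmaps : Set.MapsTo g (Set.Ioi (0 : ℝ)) (Set.Ioi (0 : ℝ)))
    (hmaps : Set.MapsTo (fun x => x * (Real.exp x - 1)) (Set.Ioi (0 : ℝ))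
      (Set.Ioi (0 : ℝ))) :
    ∃ C > (0 : ℝ), ∃ δ > (0 : ℝ), ∀ x ∈ Set.Ioo (0 : ℝ) δ,
      x * g (1 / x) ≤ C * (x * Real.log (1 + 1 / x)) := by
  refine ⟨2, by norm_num, 1, by norm_num, ?_⟩
  rintro x ⟨hx0, hx1⟩
  set y := 1/x with hy
  have hy0 : 0 < y := by positivity
  set L := Real.log (1 + y) with hL
  have hy1 : 1 < y := by rw [hy, lt_div_iff₀ hx0]; linarith
  have hL0 : 0 < L := Real.log_pos (by linarith)
  have hexp : Real.exp (2*L) = (1+y)^2 := by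
    rw [show 2*L = L + L by ring, Real.exp_add, Real.exp_log (by linarith)]; ring
  have h2 : Real.log 2 ≤ L := Real.log_le_log (by norm_num) (by linarith)
  have hlog2 : (0.6931471803 : ℝ) < Real.log 2 := Real.log_two_gt_d9
  have hkey : y ≤ (2*L) * (Real.exp (2*L) - 1) := by
    rw [hexp]
    nlinarith [sq_nonneg y]
  have hgy : (0:ℝ) < g y := hgmaps (Set.mem_Ioi.2 hy0)
  have hhg : g y * (Real.exp (g y) - 1) = y := hg.2 (Set.mem_Ioi.2 hy0)
  have hgle : g y ≤ 2*L := by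
    by_contra hlt
    push_neg at hlt
    have he : Real.exp (2*L) < Real.exp (g y) := Real.exp_lt_exp.2 hlt
    have he1 : 1 < Real.exp (2*L) := by nlinarith [Real.add_one_le_exp (2*L)]
    have h1 : (2*L) * (Real.exp (2*L) - 1) < g y * (Real.exp (g y) - 1) := by
      nlinarith
    rw [hhg] at h1; linarith
  calc x * g y ≤ x * (2*L) := by nlinarith
    _ = 2 * (x * L) := by ring
end
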